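/- Let K be a field of characteristic ≠ 2 in which every element is a square, and let Γ be an n×(2n) matrix whose first n columns form an invertible matrix and for which there exists an invertible diagonal Λ with Γ·Λ·Γᵀ = 0. Then there exist an invertible matrix A ∈ GL(n, K), an invertible diagonal matrix D ∈ GL(2n, K), and an orthogonal matrix P ∈ K^{n×n} with P·Pᵀ = Iₙ, such that A·Γ·D = [Iₙ | P]. -/

import Mathlib

open Matrix

theorem stmt_12 {K : Type*} [Field K] {n : ℕ}
    (hchar : (2 : K) ≠ 0) (hsq : ∀ a : K, ∃ b : K, b ^ 2 = a)
    (Γ₁ Γ₂ : Matrix (Fin n) (Fin n) K) (hΓ₁ : IsUnit Γ₁.det)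
    (d : Fin n ⊕ Fin n → K) (hd : ∀ i, d i ≠ 0)
    (hΓ : (Matrix.fromCols Γ₁ Γ₂) * Matrix.diagonal d *
      (Matrix.fromCols Γ₁ Γ₂)ᵀ = 0) :
    ∃ (A : Matrix (Fin n) (Fin n) K) (e : Fin n ⊕ Fin n → K)
      (P : Matrix (Fin n) (Fin n) K),
      IsUnit A.det ∧ (∀ i, e i ≠ 0) ∧ P * Pᵀ = 1 ∧
        A * (Matrix.fromCols Γ₁ Γ₂) * Matrix.diagonal e =
          Matrix.fromCols 1 P := by
  classical
  -- square roots
  set e₁ : Fin n → K := fun i => (hsq (d (Sum.inl i))).choose with he₁def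
  set e₂ : Fin n → K := fun j => (hsq (-d (Sum.inr j))).choose with he₂def
  have he₁ : ∀ i, e₁ i * e₁ i = d (Sum.inl i) := fun i => by
    have := (hsq (d (Sum.inl i))).choose_spec; rwa [sq] at this
  have he₂ : ∀ j, e₂ j * e₂ j = -d (Sum.inr j) := fun j => by
    have := (hsq (-d (Sum.inr j))).choose_spec; rwa [sq] at this
  have he₁ne : ∀ i, e₁ i ≠ 0 := by
    intro i h
    exact hd _ (by rw [← he₁ i, h, mul_zero])
  have he₂ne : ∀ j, e₂ j ≠ 0 := by
    intro j h
    have := he₂ j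
    rw [h, mul_zero] at this
    exact hd (Sum.inr j) (by rw [← neg_neg (d (Sum.inr j)), ← this, neg_zero])
  -- expand hΓ
  have hdelim : d = Sum.elim (fun i => d (Sum.inl i)) (fun j => d (Sum.inr j)) := by
    ext i; cases i <;> rfl
  have hΓ' : Γ₁ * diagonal (fun i => d (Sum.inl i)) * Γ₁ᵀ
      + Γ₂ * diagonal (fun j => d (Sum.inr j)) * Γ₂ᵀ = 0 := by
    rw [hdelim, ← Matrix.fromBlocks_diagonal, transpose_fromCols,
      fromCols_mul_fromBlocks] at hΓ
    simpa [fromCols_mul_fromRows, mul_zero, zero_mul] using hΓ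
  set B : Matrix (Fin n) (Fin n) K := Γ₁ * diagonal e₁ with hBdef
  have hdet : IsUnit B.det := by
    rw [hBdef, det_mul, det_diagonal]
    exact hΓ₁.mul (isUnit_iff_ne_zero.mpr (Finset.prod_ne_zero_iff.mpr fun i _ => he₁ne i))
  have hBB : B * Bᵀ = Γ₁ * diagonal (fun i => d (Sum.inl i)) * Γ₁ᵀ := by
    rw [hBdef, transpose_mul, diagonal_transpose]
    rw [show Γ₁ * diagonal e₁ * (diagonal e₁ * Γ₁ᵀ)
        = Γ₁ * (diagonal e₁ * diagonal e₁) * Γ₁ᵀ by noncomm_ring]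
    rw [diagonal_mul_diagonal]
    congr 2
    exact congrArg diagonal (funext fun i => he₁ i)
  have hCC : (Γ₂ * diagonal e₂) * (Γ₂ * diagonal e₂)ᵀ = B * Bᵀ := by
    rw [transpose_mul, diagonal_transpose,
      show Γ₂ * diagonal e₂ * (diagonal e₂ * Γ₂ᵀ)
        = Γ₂ * (diagonal e₂ * diagonal e₂) * Γ₂ᵀ by noncomm_ring,
      diagonal_mul_diagonal,
      show (diagonal fun i => e₂ i * e₂ i) = -diagonal fun j => d (Sum.inr j) by
        ext i j
        by_cases h : i = j <;> simp [diagonal_apply, h, he₂],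
      hBB]
    have : Γ₂ * diagonal (fun j => d (Sum.inr j)) * Γ₂ᵀ
        = -(Γ₁ * diagonal (fun i => d (Sum.inl i)) * Γ₁ᵀ) := by
      linear_combination (norm := noncomm_ring) hΓ'
    rw [show Γ₂ * -diagonal (fun j => d (Sum.inr j)) * Γ₂ᵀ
        = -(Γ₂ * diagonal (fun j => d (Sum.inr j)) * Γ₂ᵀ) by noncomm_ring, this, neg_neg]
  refine ⟨B⁻¹, Sum.elim e₁ e₂, B⁻¹ * (Γ₂ * diagonal e₂), ?_, ?_, ?_, ?_⟩
  · rw [det_nonsing_inv]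
    exact isUnit_ringInverse.mpr hdet
  · intro i; cases i with
    | inl i => exact he₁ne i
    | inr j => exact he₂ne j
  · rw [transpose_mul, transpose_nonsing_inv,
      show B⁻¹ * (Γ₂ * diagonal e₂) * ((Γ₂ * diagonal e₂)ᵀ * Bᵀ⁻¹)
        = B⁻¹ * ((Γ₂ * diagonal e₂) * (Γ₂ * diagonal e₂)ᵀ) * Bᵀ⁻¹ by noncomm_ring,
      hCC,
      show B⁻¹ * (B * Bᵀ) * Bᵀ⁻¹ = (B⁻¹ * B) * (Bᵀ * Bᵀ⁻¹) by noncomm_ring,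
      nonsing_inv_mul _ hdet, mul_nonsing_inv _ (by rwa [det_transpose]), one_mul]
  · rw [show Sum.elim e₁ e₂ = Sum.elim (fun i => e₁ i) (fun j => e₂ j) by rfl,
      ← Matrix.fromBlocks_diagonal, mul_fromCols, fromCols_mul_fromBlocks]
    simp only [mul_zero, zero_mul, add_zero, zero_add]
    rw [Matrix.mul_assoc B⁻¹ Γ₂, Matrix.mul_assoc B⁻¹ Γ₁, ← hBdef, nonsing_inv_mul _ hdet]
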